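/- Let X ⊆ ℝⁿ be a closed path-connected set admitting an inner (length) metric d_inn. For any p ∈ X, either p ∈ closure(M_X), or X is Lipschitz Normally Embedded at p, i.e., there exist r > 0 and C > 0 such that d_inn(x,y) ≤ C‖x−y‖ for all x, y ∈ X ∩ B(p,r). -/

import Mathlib

open Metric Set Filter

noncomputable section

abbrev E (n : ℕ) := EuclideanSpace ℝ (Fin n)

/-- The set of closest points of `X` to `a`. -/
def mSet {n : ℕ} (X : Set (E n)) (a : E n) : Set (E n) :=
  {x ∈ X | dist a x = Metric.infDist a X}

/-- The medial axis: points with more than one closest point in `X`. -/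
def medialAxis {n : ℕ} (X : Set (E n)) : Set (E n) :=
  {a | ∃ x ∈ mSet X a, ∃ y ∈ mSet X a, x ≠ y}

set_option maxHeartbeats 1000000

/-- `γ` is a path in `X` from `x` to `y`, parametrized on `[0,1]`. -/
def IsPathIn {n : ℕ} (X : Set (E n)) (x y : E n) (γ : ℝ → E n) : Prop :=
  ContinuousOn γ (Set.Icc 0 1) ∧ γ 0 = x ∧ γ 1 = y ∧ ∀ t ∈ Set.Icc 0 1, γ t ∈ X

/-- Length of a curve parametrized on `[0,1]`. -/
def pathLength {n : ℕ} (γ : ℝ → E n) : ENNReal := eVariationOn γ (Set.Icc 0 1)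

/-- The inner metric: infimum of lengths of paths in `X` joining `x` and `y`. -/
def dInn {n : ℕ} (X : Set (E n)) (x y : E n) : ENNReal :=
  ⨅ γ ∈ {γ | IsPathIn X x y γ}, pathLength γ

namespace Stmt9

variable {n : ℕ}

lemma exists_near {X : Set (E n)} (hX : IsClosed X) {p : E n} (hp : p ∈ X) (a : E n) :
    ∃ z ∈ X, dist a z = Metric.infDist a X := by
  obtain ⟨y, hy, hdy⟩ := hX.exists_infDist_eq_dist ⟨p, hp⟩ a
  exact ⟨y, hy, hdy.symm⟩

/-- a choice of nearest point -/
def xi (X : Set (E n)) (p : E n) (a : E n) : E n :=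
  Classical.epsilon (fun z => z ∈ X ∧ dist a z = Metric.infDist a X)

lemma xi_spec {X : Set (E n)} (hX : IsClosed X) {p : E n} (hp : p ∈ X) (a : E n) :
    xi X p a ∈ X ∧ dist a (xi X p a) = Metric.infDist a X := by
  have h := exists_near hX hp a
  obtain ⟨z, hz, hdz⟩ := h
  exact Classical.epsilon_spec (p := fun z => z ∈ X ∧ dist a z = Metric.infDist a X) ⟨z, hz, hdz⟩

lemma xi_mem {X : Set (E n)} (hX : IsClosed X) {p : E n} (hp : p ∈ X) (a : E n) :
    xi X p a ∈ X := (xi_spec hX hp a).1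

lemma xi_dist {X : Set (E n)} (hX : IsClosed X) {p : E n} (hp : p ∈ X) (a : E n) :
    dist a (xi X p a) = Metric.infDist a X := (xi_spec hX hp a).2

lemma eq_xi {X : Set (E n)} (hX : IsClosed X) {p : E n} (hp : p ∈ X) {R : ℝ}
    (hU : ∀ a ∈ Metric.ball p R, a ∉ medialAxis X) {a : E n} (ha : a ∈ Metric.ball p R)
    {z : E n} (hz : z ∈ X) (hdz : dist a z = Metric.infDist a X) : z = xi X p a := by
  by_contra hne
  exact hU a ha ⟨z, ⟨hz, hdz⟩, xi X p a, ⟨xi_mem hX hp a, xi_dist hX hp a⟩, hne⟩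

lemma le_infDist' {X : Set (E n)} (hXne : X.Nonempty) {a : E n} {b : ℝ}
    (h : ∀ z ∈ X, b ≤ dist a z) : b ≤ Metric.infDist a X := by
  by_contra hlt
  push_neg at hlt
  obtain ⟨z, hz, hdz⟩ := (Metric.infDist_lt_iff hXne).1 hlt
  exact absurd hdz (not_lt.2 (h z hz))

lemma infDist_lip {X : Set (E n)} (a b : E n) :
    Metric.infDist a X ≤ Metric.infDist b X + dist a b :=
  Metric.infDist_le_infDist_add_dist

/-- Uniform approximate uniqueness of nearest points on a compact set avoiding the
medial axis. -/
lemma approx {X : Set (E n)} (hX : IsClosed X) {p : E n} (hp : p ∈ X) {R : ℝ}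
    (hU : ∀ a ∈ Metric.ball p R, a ∉ medialAxis X) {R2 : ℝ} (hR2 : 0 ≤ R2) (hR2R : R2 < R) :
    ∀ η > (0:ℝ), ∃ ε > (0:ℝ), ∀ a ∈ Metric.closedBall p R2, ∀ z ∈ X, ∀ z' ∈ X,
      dist a z ≤ Metric.infDist a X + ε → dist a z' ≤ Metric.infDist a X + ε →
      dist z z' ≤ η := by
  intro η hη
  by_contra hcon
  push_neg at hcon
  have H : ∀ k : ℕ, ∃ a ∈ Metric.closedBall p R2, ∃ z ∈ X, ∃ z' ∈ X,
      dist a z ≤ Metric.infDist a X + 1/((k:ℝ)+1) ∧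
      dist a z' ≤ Metric.infDist a X + 1/((k:ℝ)+1) ∧ η < dist z z' := by
    intro k
    exact hcon (1/((k:ℝ)+1)) (by positivity)
  choose a ha z hz z' hz' h1 h2 h3 using H
  have hinf_le : ∀ k, Metric.infDist (a k) X ≤ R2 := fun k =>
    le_trans (Metric.infDist_le_dist_of_mem hp) (by simpa [dist_comm] using (mem_closedBall.1 (ha k)))
  have hek : ∀ k : ℕ, 1/((k:ℝ)+1) ≤ 1 := by
    intro k
    rw [div_le_one (by positivity)]
    linarith [Nat.cast_nonneg (α := ℝ) k]
  have hzball : ∀ k, z k ∈ Metric.closedBall p (2*R2+1) := by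
    intro k
    rw [mem_closedBall, dist_comm]
    calc dist p (z k) ≤ dist p (a k) + dist (a k) (z k) := dist_triangle _ _ _
    _ ≤ R2 + (R2 + 1) := by
        have := (h1 k).trans (add_le_add (hinf_le k) (hek k))
        have hpa : dist p (a k) ≤ R2 := by rw [dist_comm]; exact mem_closedBall.1 (ha k)
        linarith
    _ = 2*R2+1 := by ring
  have hz'ball : ∀ k, z' k ∈ Metric.closedBall p (2*R2+1) := by
    intro k
    rw [mem_closedBall, dist_comm]
    calc dist p (z' k) ≤ dist p (a k) + dist (a k) (z' k) := dist_triangle _ _ _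
    _ ≤ R2 + (R2 + 1) := by
        have := (h2 k).trans (add_le_add (hinf_le k) (hek k))
        have hpa : dist p (a k) ≤ R2 := by rw [dist_comm]; exact mem_closedBall.1 (ha k)
        linarith
    _ = 2*R2+1 := by ring
  obtain ⟨A, hA, φ, hφ, hφa⟩ := (isCompact_closedBall p R2).tendsto_subseq ha
  obtain ⟨Z, -, ψ, hψ, hψz⟩ :=
    (isCompact_closedBall p (2*R2+1)).tendsto_subseq (fun k => hzball (φ k))
  obtain ⟨Z', -, χ, hχ, hχz'⟩ :=
    (isCompact_closedBall p (2*R2+1)).tendsto_subseq (fun k => hz'ball (φ (ψ k)))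
  set idx : ℕ → ℕ := fun m => φ (ψ (χ m)) with hidx
  have hidx_tendsto : Tendsto (fun m => ψ (χ m)) atTop atTop :=
    (hψ.comp hχ).tendsto_atTop
  have hA' : Tendsto (fun m => a (idx m)) atTop (nhds A) := hφa.comp hidx_tendsto
  have hZ' : Tendsto (fun m => z (idx m)) atTop (nhds Z) := hψz.comp hχ.tendsto_atTop
  have hZ'' : Tendsto (fun m => z' (idx m)) atTop (nhds Z') := hχz'
  have hidx_at : Tendsto idx atTop atTop := (hφ.comp (hψ.comp hχ)).tendsto_atTop
  have heps : Tendsto (fun m => 1/((idx m : ℝ)+1)) atTop (nhds 0) :=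
    tendsto_one_div_add_atTop_nhds_zero_nat.comp hidx_at
  have hZX : Z ∈ X := hX.mem_of_tendsto hZ' (Eventually.of_forall fun m => hz _)
  have hZ'X : Z' ∈ X := hX.mem_of_tendsto hZ'' (Eventually.of_forall fun m => hz' _)
  have hinfA : Tendsto (fun m => Metric.infDist (a (idx m)) X) atTop
      (nhds (Metric.infDist A X)) :=
    ((continuous_infDist_pt X).tendsto A).comp hA'
  have hdistZ : dist A Z = Metric.infDist A X := by
    refine le_antisymm ?_ (Metric.infDist_le_dist_of_mem hZX)
    have hl : Tendsto (fun m => dist (a (idx m)) (z (idx m))) atTop (nhds (dist A Z)) :=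
      hA'.dist hZ'
    have hr : Tendsto (fun m => Metric.infDist (a (idx m)) X + 1/((idx m:ℝ)+1)) atTop
        (nhds (Metric.infDist A X + 0)) := hinfA.add heps
    rw [add_zero] at hr
    exact le_of_tendsto_of_tendsto' hl hr (fun m => h1 _)
  have hdistZ' : dist A Z' = Metric.infDist A X := by
    refine le_antisymm ?_ (Metric.infDist_le_dist_of_mem hZ'X)
    have hl : Tendsto (fun m => dist (a (idx m)) (z' (idx m))) atTop (nhds (dist A Z')) :=
      hA'.dist hZ''
    have hr : Tendsto (fun m => Metric.infDist (a (idx m)) X + 1/((idx m:ℝ)+1)) atTop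
        (nhds (Metric.infDist A X + 0)) := hinfA.add heps
    rw [add_zero] at hr
    exact le_of_tendsto_of_tendsto' hl hr (fun m => h2 _)
  have hAball : A ∈ Metric.ball p R := lt_of_le_of_lt (mem_closedBall.1 hA) hR2R
  have hZZ' : Z = Z' := by
    rw [eq_xi hX hp hU hAball hZX hdistZ, eq_xi hX hp hU hAball hZ'X hdistZ']
  have hfinal : Tendsto (fun m => dist (z (idx m)) (z' (idx m))) atTop (nhds (dist Z Z')) :=
    hZ'.dist hZ''
  have : η ≤ dist Z Z' := ge_of_tendsto hfinal (Eventually.of_forall fun m => (h3 _).le)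
  rw [hZZ', dist_self] at this
  linarith

/-- One step of the outward normal march. -/
lemma step {X : Set (E n)} (hX : IsClosed X) {p : E n} (hp : p ∈ X)
    {a : E n} {d ζ ε η : ℝ} (hd : d = Metric.infDist a X) (hd0 : 0 < d)
    (hζ0 : 0 < ζ) (hζ1 : ζ ≤ 1/2) (hε : 0 < ε) (hη : η ≤ ζ * d)
    (happ : ∀ z ∈ X, dist a z ≤ d + 2*ε → dist z (xi X p a) ≤ η) :
    d + (1-ζ)*ε ≤ Metric.infDist (a + ε • (d⁻¹ • (a - xi X p a))) X ∧
      dist (a + ε • (d⁻¹ • (a - xi X p a))) a = ε := by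
  set x := xi X p a with hx
  set u : E n := d⁻¹ • (a - x) with hu
  have hax : ‖a - x‖ = d := by
    rw [← dist_eq_norm, xi_dist hX hp a, hd]
  have hun : ‖u‖ = 1 := by
    rw [hu, norm_smul, hax, Real.norm_eq_abs, abs_inv, abs_of_pos hd0,
      inv_mul_cancel₀ (ne_of_gt hd0)]
  have hdistu : dist (a + ε • u) a = ε := by
    rw [dist_eq_norm, add_sub_cancel_left, norm_smul, hun, Real.norm_eq_abs,
      abs_of_pos hε, mul_one]
  refine ⟨le_infDist' ⟨p, hp⟩ ?_, hdistu⟩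
  intro z hz
  have hdz : d ≤ dist a z := hd ▸ Metric.infDist_le_dist_of_mem hz
  by_cases hfar : d + 2*ε ≤ dist a z
  · have : dist a z - ε ≤ dist (a + ε • u) z := by
      have := dist_triangle a (a + ε • u) z
      rw [dist_comm a (a + ε • u), hdistu] at this
      linarith
    nlinarith
  · push_neg at hfar
    have hnz : dist z x ≤ η := happ z hz hfar.le
    have hkey : (d + (1-ζ)*ε)^2 ≤ (dist (a + ε • u) z)^2 := by
      have hrw : a + ε • u - z = (a - z) + ε • u := by abel
      rw [dist_eq_norm, hrw, norm_add_sq_real]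
      have hinner : inner ℝ (a - z) (ε • u) = ε * (d - inner ℝ (z - x) u) := by
        rw [real_inner_smul_right]
        have : (a - z : E n) = (a - x) - (z - x) := by abel
        rw [this, inner_sub_left]
        have : inner ℝ (a - x) u = (d : ℝ) := by
          rw [hu, real_inner_smul_right, real_inner_self_eq_norm_sq, hax]
          field_simp
        rw [this]
      have hcs : inner ℝ (z - x) u ≤ η := by
        calc (inner ℝ (z - x) u : ℝ) ≤ ‖z - x‖ * ‖u‖ := real_inner_le_norm _ _
        _ = dist z x := by rw [hun, mul_one, dist_eq_norm]
        _ ≤ η := hnz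
      have hnorm1 : d ≤ ‖a - z‖ := by rwa [← dist_eq_norm]
      have hnormu : ‖ε • u‖ = ε := by
        rw [norm_smul, hun, Real.norm_eq_abs, abs_of_pos hε, mul_one]
      rw [hinner, hnormu]
      have h1 : d^2 ≤ ‖a - z‖^2 := by nlinarith [hnorm1, hd0.le]
      have h2 : ε * inner ℝ (z - x) u ≤ ε * (ζ * d) :=
        mul_le_mul_of_nonneg_left (hcs.trans hη) hε.le
      nlinarith [h1, h2, sq_nonneg ε, mul_nonneg (mul_nonneg hζ0.le hε.le) hε.le,
        mul_nonneg hζ0.le hε.le, mul_pos hε hd0, sq_nonneg (ζ*ε)]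
    have hpos : 0 ≤ d + (1-ζ)*ε := by nlinarith
    nlinarith [dist_nonneg (x := a + ε • u) (y := z), hkey]

/-- The outward march: from a point `a` near `p` with positive distance to `X`, reach a point
`c` at distance nearly `ρ = R/16` from `X`, nearly along a straight line. -/
lemma ray {X : Set (E n)} (hX : IsClosed X) {p : E n} (hp : p ∈ X) {R : ℝ} (hR : 0 < R)
    (hU : ∀ b ∈ Metric.ball p R, b ∉ medialAxis X)
    {a : E n} (ha : dist a p ≤ R/8) (hd0 : 0 < Metric.infDist a X)
    (hdρ : Metric.infDist a X ≤ R/16) {ζ : ℝ} (hζ0 : 0 < ζ) (hζ1 : ζ ≤ 1/2) :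
    ∃ c, dist c p ≤ R/2 ∧ R/16 ≤ Metric.infDist c X ∧ Metric.infDist c X ≤ R/16 + ζ ∧
      (1-ζ) * dist c a ≤ Metric.infDist c X - Metric.infDist a X := by
  set ρ : ℝ := R/16 with hρ
  set d₀ : ℝ := Metric.infDist a X with hd₀
  have hρ0 : 0 < ρ := by rw [hρ]; linarith
  obtain ⟨ε₁, hε₁, happrox⟩ := approx hX hp hU (R2 := R/2) (by linarith) (by linarith)
    (ζ * d₀) (by positivity)
  set ε : ℝ := min (ε₁/2) (min ζ ρ) with hε
  have hε0 : 0 < ε := by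
    apply lt_min (by linarith) (lt_min hζ0 hρ0)
  have hεε₁ : 2*ε ≤ ε₁ := by
    have := min_le_left (ε₁/2) (min ζ ρ); linarith [this.trans_eq rfl]
  have hεζ : ε ≤ ζ := (min_le_right _ _).trans (min_le_left _ _)
  have hερ : ε ≤ ρ := (min_le_right _ _).trans (min_le_right _ _)
  obtain ⟨f, hf0, hfs⟩ : ∃ f : ℕ → E n, f 0 = a ∧ ∀ k, f (k+1) =
      (if Metric.infDist (f k) X < ρ then
        f k + ε • ((Metric.infDist (f k) X)⁻¹ • (f k - xi X p (f k))) else f k) :=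
    ⟨fun k => Nat.rec a (fun _ b => if Metric.infDist b X < ρ then
        b + ε • ((Metric.infDist b X)⁻¹ • (b - xi X p b)) else b) k, rfl, fun k => rfl⟩
  have hζ1' : (0:ℝ) < 1 - ζ := by linarith
  have inv : ∀ k, d₀ ≤ Metric.infDist (f k) X ∧ Metric.infDist (f k) X ≤ ρ + ε ∧
      (1-ζ) * dist (f k) a ≤ Metric.infDist (f k) X - d₀ ∧
      (d₀ + k*((1-ζ)*ε) ≤ Metric.infDist (f k) X ∨ ρ ≤ Metric.infDist (f k) X) := by
    intro k
    induction k with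
    | zero =>
      simp only [hf0]
      refine ⟨le_rfl, by linarith, ?_, Or.inl (by simp [hd₀])⟩
      rw [dist_self, mul_zero]
      linarith
    | succ k ih =>
      obtain ⟨i1, i2, i3, i4⟩ := ih
      by_cases hlt : Metric.infDist (f k) X < ρ
      · have hfk1 : f (k+1) = f k + ε • ((Metric.infDist (f k) X)⁻¹ • (f k - xi X p (f k))) := by
          rw [hfs, if_pos hlt]
        have hfka : dist (f k) a ≤ 4*ρ := by
          have h1 : (1-ζ) * dist (f k) a ≤ ρ + ε - d₀ := by linarith
          have h2 : dist (f k) a ≤ (ρ + ε - d₀) / (1-ζ) := by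
            rw [le_div_iff₀ hζ1']; linarith [mul_comm (dist (f k) a) (1-ζ)]
          have h3 : (ρ + ε - d₀) / (1-ζ) ≤ (2*ρ) / (1/2) := by
            apply div_le_div₀ (by linarith) (by linarith) (by linarith) (by linarith)
          linarith [h2.trans h3]
        have hfkp : f k ∈ Metric.closedBall p (R/2) := by
          rw [mem_closedBall]
          calc dist (f k) p ≤ dist (f k) a + dist a p := dist_triangle _ _ _
          _ ≤ 4*ρ + R/8 := by linarith
          _ ≤ R/2 := by rw [hρ]; linarith
        have hdk0 : 0 < Metric.infDist (f k) X := lt_of_lt_of_le hd0 i1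
        have happ : ∀ z ∈ X, dist (f k) z ≤ Metric.infDist (f k) X + 2*ε →
            dist z (xi X p (f k)) ≤ ζ * d₀ := by
          intro z hz hdz
          exact happrox (f k) hfkp z hz (xi X p (f k)) (xi_mem hX hp (f k))
            (by linarith) (by rw [(xi_dist hX hp (f k))]; linarith)
        have hstep := step hX hp rfl hdk0 hζ0 hζ1 hε0
          (show ζ * d₀ ≤ ζ * Metric.infDist (f k) X by nlinarith) happ
        rw [← hfk1] at hstep
        obtain ⟨hgrow, hdist1⟩ := hstep
        have hpe : 0 < (1-ζ)*ε := by positivity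
        have hlip : Metric.infDist (f (k+1)) X ≤ Metric.infDist (f k) X + ε := by
          have := Metric.infDist_le_infDist_add_dist (x := f (k+1)) (y := f k) (s := X)
          rw [hdist1] at this
          exact this
        refine ⟨by linarith, by linarith, ?_, ?_⟩
        · have htri : dist (f (k+1)) a ≤ ε + dist (f k) a := by
            calc dist (f (k+1)) a ≤ dist (f (k+1)) (f k) + dist (f k) a := dist_triangle _ _ _
            _ = ε + dist (f k) a := by rw [hdist1]
          nlinarith [htri]
        · rcases i4 with h | h
          · left
            push_cast [Nat.cast_succ]
            nlinarith
          · linarith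
      · have hfk1 : f (k+1) = f k := by rw [hfs, if_neg hlt]
        rw [hfk1]
        exact ⟨i1, i2, i3, Or.inr (not_lt.1 hlt)⟩
  obtain ⟨N, hN⟩ := exists_nat_gt ((ρ - d₀)/((1-ζ)*ε))
  obtain ⟨i1, i2, i3, i4⟩ := inv N
  have hcρ : ρ ≤ Metric.infDist (f N) X := by
    rcases i4 with h | h
    · have : ρ - d₀ < N * ((1-ζ)*ε) := by
        rw [div_lt_iff₀ (by positivity)] at hN
        exact hN
      linarith
    · exact h
  refine ⟨f N, ?_, hcρ, by linarith, i3⟩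
  have hfka : dist (f N) a ≤ 4*ρ := by
    have h2 : dist (f N) a ≤ (ρ + ε - d₀) / (1-ζ) := by
      rw [le_div_iff₀ hζ1']; nlinarith
    have h3 : (ρ + ε - d₀) / (1-ζ) ≤ (2*ρ) / (1/2) := by
      apply div_le_div₀ (by linarith) (by linarith) (by linarith) (by linarith)
    linarith [h2.trans h3]
  calc dist (f N) p ≤ dist (f N) a + dist a p := dist_triangle _ _ _
  _ ≤ 4*ρ + R/8 := by linarith
  _ ≤ R/2 := by rw [hρ]; linarith

/-- Federer's normal inequality: the vector from the foot point `xi a` to `a` makes a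
quantitatively obtuse angle with any direction into `X`. -/
lemma normal {X : Set (E n)} (hX : IsClosed X) {p : E n} (hp : p ∈ X) {R : ℝ} (hR : 0 < R)
    (hU : ∀ b ∈ Metric.ball p R, b ∉ medialAxis X)
    {a : E n} (ha : dist a p ≤ R/8) (hdρ : Metric.infDist a X ≤ R/16) :
    ∀ z ∈ X, (inner ℝ (a - xi X p a) (z - xi X p a) : ℝ) ≤
      Metric.infDist a X * ‖z - xi X p a‖^2 / (2*(R/16)) := by
  set ρ : ℝ := R/16 with hρ
  set x := xi X p a with hx
  set d := Metric.infDist a X with hd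
  have hρ0 : 0 < ρ := by rw [hρ]; linarith
  have hdax : dist a x = d := xi_dist hX hp a
  rcases eq_or_lt_of_le (Metric.infDist_nonneg : (0:ℝ) ≤ Metric.infDist a X) with h0 | hd0
  · intro z hz
    have hax : a = x := by
      have h : dist a x = 0 := by rw [hdax, hd, ← h0]
      exact dist_eq_zero.1 h
    have hz0 : a - x = 0 := sub_eq_zero.2 hax
    have hd0' : d = 0 := by rw [hd, ← h0]
    rw [hz0, inner_zero_left, hd0']
    simp
  rw [← hd] at hd0
  -- the march for ζ = 1/(m+2)
  have hseq : ∀ m : ℕ, ∃ c, dist c p ≤ R/2 ∧ ρ ≤ Metric.infDist c X ∧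
      Metric.infDist c X ≤ ρ + 1/((m:ℝ)+2) ∧
      (1 - 1/((m:ℝ)+2)) * dist c a ≤ Metric.infDist c X - d := by
    intro m
    have h1 : (0:ℝ) < 1/((m:ℝ)+2) := by positivity
    have h2 : 1/((m:ℝ)+2) ≤ 1/2 := by
      apply div_le_div_of_nonneg_left (by norm_num) (by norm_num)
      linarith [Nat.cast_nonneg (α := ℝ) m]
    exact ray hX hp hR hU ha hd0 hdρ h1 h2
  choose c hc1 hc2 hc3 hc4 using hseq
  obtain ⟨b, -, φ, hφ, hconv⟩ := (isCompact_closedBall p (R/2)).tendsto_subseq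
    (fun m => mem_closedBall.2 (hc1 m))
  have hζ0' : Tendsto (fun m : ℕ => 1/((m:ℝ)+2)) atTop (nhds 0) := by
    have := (tendsto_one_div_add_atTop_nhds_zero_nat (𝕜 := ℝ)).comp (tendsto_add_atTop_nat 1)
    refine this.congr fun m => ?_
    simp only [Function.comp_apply]
    push_cast
    ring_nf
  have hζφ : Tendsto (fun m : ℕ => 1/((φ m:ℝ)+2)) atTop (nhds 0) :=
    hζ0'.comp hφ.tendsto_atTop
  have hinfc : Tendsto (fun m => Metric.infDist (c (φ m)) X) atTop
      (nhds (Metric.infDist b X)) := ((continuous_infDist_pt X).tendsto b).comp hconv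
  have hbρ : Metric.infDist b X = ρ := by
    refine le_antisymm ?_ (ge_of_tendsto hinfc (Eventually.of_forall fun m => hc2 _))
    have hr : Tendsto (fun m => ρ + 1/((φ m:ℝ)+2)) atTop (nhds (ρ + 0)) :=
      tendsto_const_nhds.add hζφ
    rw [add_zero] at hr
    exact le_of_tendsto_of_tendsto' hinfc hr (fun m => hc3 _)
  have hdistconv : Tendsto (fun m => dist (c (φ m)) a) atTop (nhds (dist b a)) :=
    hconv.dist tendsto_const_nhds
  have hdistba : dist b a ≤ ρ - d := by
    have hl : Tendsto (fun m => (1 - 1/((φ m:ℝ)+2)) * dist (c (φ m)) a) atTop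
        (nhds ((1-0) * dist b a)) := (tendsto_const_nhds.sub hζφ).mul hdistconv
    rw [sub_zero, one_mul] at hl
    have hr : Tendsto (fun m => Metric.infDist (c (φ m)) X - d) atTop
        (nhds (Metric.infDist b X - d)) := hinfc.sub tendsto_const_nhds
    rw [hbρ] at hr
    exact le_of_tendsto_of_tendsto' hl hr (fun m => hc4 _)
  have hdab : ρ - d ≤ dist b a := by
    have h := Metric.infDist_le_infDist_add_dist (x := b) (y := a) (s := X)
    rw [hbρ, ← hd] at h
    linarith
  have hdba : dist b a = ρ - d := le_antisymm hdistba hdab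
  have hdbx : dist b x = ρ := by
    refine le_antisymm ?_ ?_
    · calc dist b x ≤ dist b a + dist a x := dist_triangle _ _ _
      _ = ρ := by rw [hdba, hdax]; ring
    · have h := Metric.infDist_le_dist_of_mem (x := b) (xi_mem hX hp a)
      rw [hbρ, ← hx] at h
      exact h
  -- collinearity: b lies on the ray from x through a
  have hnax : ‖a - x‖ = d := by rw [← dist_eq_norm]; exact hdax
  have hnba : ‖b - a‖ = ρ - d := by rw [← dist_eq_norm]; exact hdba
  have hnbx : ‖b - x‖ = ρ := by rw [← dist_eq_norm]; exact hdbx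
  have hinnerEq : (inner ℝ (a - x) (b - a) : ℝ) = ‖a - x‖ * ‖b - a‖ := by
    have hsq := norm_add_sq_real (a - x) (b - a)
    have hsum : a - x + (b - a) = b - x := by abel
    rw [hsum, hnbx, hnax, hnba] at hsq
    nlinarith [hsq]
  have hcol : ‖b - a‖ • (a - x) = ‖a - x‖ • (b - a) := inner_eq_norm_mul_iff_real.1 hinnerEq
  rw [hnax, hnba] at hcol
  have hbx : d • (b - x) = ρ • (a - x) := by
    have hsum : (b : E n) - x = (b - a) + (a - x) := by abel
    rw [hsum, smul_add, ← hcol, ← add_smul]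
    ring_nf
  -- conclude the inequality
  intro z hz
  have hρz : ρ ≤ dist b z := by
    have h := Metric.infDist_le_dist_of_mem (x := b) hz
    rw [hbρ] at h
    exact h
  have hexp : 2 * (inner ℝ (b - x) (z - x) : ℝ) ≤ ‖z - x‖^2 := by
    have h1 : (dist b z)^2 = ‖(b - x) - (z - x)‖^2 := by
      rw [dist_eq_norm]
      congr 1
      abel
    rw [norm_sub_sq_real, hnbx] at h1
    nlinarith [hρz, dist_nonneg (x := b) (y := z)]
  have hinner2 : d * (inner ℝ (b - x) (z - x) : ℝ) = ρ * (inner ℝ (a - x) (z - x) : ℝ) := by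
    rw [← real_inner_smul_left, ← real_inner_smul_left, hbx]
  rw [le_div_iff₀ (by positivity : (0:ℝ) < 2*ρ)]
  have h3 := mul_le_mul_of_nonneg_left hexp hd0.le
  nlinarith [h3, hinner2, hd0.le, hρ0.le]

/-- The nearest-point projection is 2-Lipschitz along segments between nearby points of `X`. -/
lemma xi_lip {X : Set (E n)} (hX : IsClosed X) {p : E n} (hp : p ∈ X) {R : ℝ} (hR : 0 < R)
    (hU : ∀ b ∈ Metric.ball p R, b ∉ medialAxis X)
    {x y : E n} (hxX : x ∈ X) (hyX : y ∈ X) (hxp : dist x p ≤ R/64) (hyp : dist y p ≤ R/64)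
    {a b : E n} (haseg : a ∈ segment ℝ x y) (hbseg : b ∈ segment ℝ x y) :
    dist (xi X p a) (xi X p b) ≤ 2 * dist a b := by
  have hxy : dist x y ≤ R/32 := by
    calc dist x y ≤ dist x p + dist p y := dist_triangle _ _ _
    _ ≤ R/64 + R/64 := by rw [dist_comm p y]; linarith
    _ = R/32 := by ring
  have hsegfacts : ∀ w ∈ segment ℝ x y, dist w x ≤ R/32 ∧ dist w p ≤ R/8 ∧
      Metric.infDist w X ≤ R/32 := by
    intro w hw
    obtain ⟨s, t, hs, ht, hst, rfl⟩ := hw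
    have hwx : dist (s • x + t • y) x = t * dist x y := by
      rw [dist_eq_norm, dist_eq_norm]
      have : s • x + t • y - x = t • (y - x) := by
        rw [← sub_eq_zero]
        have hs' : s = 1 - t := by linarith
        rw [hs']
        module
      rw [this, norm_smul, Real.norm_eq_abs, abs_of_nonneg ht, norm_sub_rev]
    have h1 : dist (s • x + t • y) x ≤ R/32 := by
      rw [hwx]
      nlinarith [dist_nonneg (x := x) (y := y)]
    refine ⟨h1, ?_, ?_⟩
    · calc dist (s • x + t • y) p ≤ dist (s • x + t • y) x + dist x p := dist_triangle _ _ _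
      _ ≤ R/32 + R/64 := by linarith
      _ ≤ R/8 := by linarith
    · exact (Metric.infDist_le_dist_of_mem hxX).trans h1
  obtain ⟨hax, hap, hainf⟩ := hsegfacts a haseg
  obtain ⟨hbx, hbp, hbinf⟩ := hsegfacts b hbseg
  set xa := xi X p a with hxa
  set xb := xi X p b with hxb
  set w : ℝ := ‖xb - xa‖ with hw
  have hρ16 : Metric.infDist a X ≤ R/16 := hainf.trans (by linarith)
  have hρ16' : Metric.infDist b X ≤ R/16 := hbinf.trans (by linarith)
  have h1 := normal hX hp hR hU hap hρ16 (xi X p b) (xi_mem hX hp b)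
  have h2 := normal hX hp hR hU hbp hρ16' (xi X p a) (xi_mem hX hp a)
  rw [← hxa, ← hxb] at h1 h2
  have hq1 : (inner ℝ (a - xa) (xb - xa) : ℝ) ≤ w^2/4 := by
    refine h1.trans ?_
    rw [div_le_div_iff₀ (by positivity) (by norm_num)]
    have hge := mul_nonneg (sub_nonneg.2 hainf) (sq_nonneg w)
    rw [hw]
    nlinarith [sq_nonneg ‖xb - xa‖]
  have hq2 : (inner ℝ (b - xb) (xa - xb) : ℝ) ≤ w^2/4 := by
    refine h2.trans ?_
    rw [div_le_div_iff₀ (by positivity) (by norm_num)]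
    have hge := mul_nonneg (sub_nonneg.2 hbinf) (sq_nonneg w)
    have hrev : ‖xa - xb‖ = w := by rw [hw, norm_sub_rev]
    rw [hrev]
    nlinarith [sq_nonneg w]
  have hsum : (inner ℝ (a - xa) (xb - xa) : ℝ) + inner ℝ (b - xb) (xa - xb) =
      inner ℝ (a - b) (xb - xa) + w^2 := by
    have e1 : (inner ℝ (b - xb) (xa - xb) : ℝ) = - inner ℝ (b - xb) (xb - xa) := by
      rw [← inner_neg_right]
      congr 1
      abel
    rw [e1, ← sub_eq_add_neg, ← inner_sub_left,
      show (a - xa) - (b - xb) = (a - b) + (xb - xa) by abel, inner_add_left,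
      real_inner_self_eq_norm_sq, ← hw]
  have hcs : (inner ℝ (a - b) (xb - xa) : ℝ) ≥ - (dist a b * w) := by
    have := real_inner_le_norm (b - a) (xb - xa)
    have h' : (inner ℝ (b - a) (xb - xa) : ℝ) ≤ ‖b - a‖ * w := by rw [hw]; exact this
    have hflip : (inner ℝ (a - b) (xb - xa) : ℝ) = - inner ℝ (b - a) (xb - xa) := by
      rw [← inner_neg_left]
      congr 1
      abel
    rw [hflip, dist_eq_norm, norm_sub_rev]
    linarith
  have hkey : w^2/2 ≤ dist a b * w := by linarith [hq1, hq2, hsum, hcs]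
  have hdw : dist xa xb = w := by rw [dist_eq_norm, norm_sub_rev, hw]
  rw [hdw]
  rcases eq_or_lt_of_le (norm_nonneg (xb - xa)) with h0 | h0
  · rw [← hw] at h0
    rw [← h0]
    positivity
  · rw [← hw] at h0
    by_contra hcon
    push_neg at hcon
    nlinarith [hkey, h0]

end Stmt9

theorem stmt_9 {n : ℕ} (X : Set (E n)) (hX : IsClosed X) (hpc : IsPathConnected X)
    (p : E n) (hp : p ∈ X) :
    p ∈ closure (medialAxis X) ∨
      ∃ r > (0:ℝ), ∃ C > (0:ℝ), ∀ x ∈ X ∩ Metric.ball p r, ∀ y ∈ X ∩ Metric.ball p r,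
        dInn X x y ≤ ENNReal.ofReal (C * dist x y) := by
  by_cases hcl : p ∈ closure (medialAxis X)
  · exact Or.inl hcl
  right
  rw [Metric.mem_closure_iff] at hcl
  push_neg at hcl
  obtain ⟨R, hR0, hRprop⟩ := hcl
  have hU : ∀ b ∈ Metric.ball p R, b ∉ medialAxis X := by
    intro b hb hmem
    exact absurd (mem_ball'.1 hb) (not_lt.2 (hRprop b hmem))
  refine ⟨R/64, by linarith, 2, by norm_num, ?_⟩
  rintro x ⟨hxX, hxB⟩ y ⟨hyX, hyB⟩
  set γ : ℝ → E n := fun t => Stmt9.xi X p (x + t • (y - x)) with hγ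
  have hxp : dist x p ≤ R/64 := (mem_ball.1 hxB).le
  have hyp : dist y p ≤ R/64 := (mem_ball.1 hyB).le
  have hseg : ∀ t ∈ Set.Icc (0:ℝ) 1, x + t • (y - x) ∈ segment ℝ x y := by
    intro t ht
    exact ⟨1 - t, t, by linarith [ht.2], ht.1, by ring, by module⟩
  set K : NNReal := Real.toNNReal (2*‖y - x‖) with hK
  have hlip : LipschitzOnWith K γ (Set.Icc 0 1) := by
    apply LipschitzOnWith.of_dist_le_mul
    intro t ht t' ht'
    have hd : dist (x + t • (y - x)) (x + t' • (y - x)) = dist t t' * ‖y - x‖ := by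
      rw [dist_eq_norm, Real.dist_eq]
      have : x + t • (y - x) - (x + t' • (y - x)) = (t - t') • (y - x) := by module
      rw [this, norm_smul, Real.norm_eq_abs]
    have h2 := Stmt9.xi_lip hX hp hR0 hU hxX hyX hxp hyp (hseg t ht) (hseg t' ht')
    rw [hγ]
    have hKcoe : (K : ℝ) = 2*‖y - x‖ := Real.coe_toNNReal _ (by positivity)
    calc dist (Stmt9.xi X p (x + t • (y - x))) (Stmt9.xi X p (x + t' • (y - x)))
        ≤ 2 * dist (x + t • (y - x)) (x + t' • (y - x)) := h2
    _ = (K : ℝ) * dist t t' := by rw [hd, hKcoe]; ring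
  have hxi_fix : ∀ z ∈ X, Stmt9.xi X p z = z := by
    intro z hz
    have h := Stmt9.xi_dist hX hp z
    rw [Metric.infDist_zero_of_mem hz] at h
    exact (dist_eq_zero.1 h).symm
  have hpath : IsPathIn X x y γ := by
    refine ⟨hlip.continuousOn, ?_, ?_, ?_⟩
    · rw [hγ]
      simp only [zero_smul, add_zero]
      exact hxi_fix x hxX
    · rw [hγ]
      simp only [one_smul, add_sub_cancel]
      exact hxi_fix y hyX
    · intro t ht
      exact Stmt9.xi_mem hX hp _
  have hid : eVariationOn (id : ℝ → ℝ) (Set.Icc 0 1) ≤ ENNReal.ofReal 1 := by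
    have h := monotoneOn_id.eVariationOn_le (f := (id : ℝ → ℝ)) (s := Set.Icc (0:ℝ) 1)
      (left_mem_Icc.2 zero_le_one) (right_mem_Icc.2 zero_le_one)
    simpa using h
  have hvar : pathLength γ ≤ (K : ENNReal) := by
    have hcomp : eVariationOn (γ ∘ id) (Set.Icc 0 1) ≤ (K : ENNReal) *
        eVariationOn (id : ℝ → ℝ) (Set.Icc 0 1) :=
      hlip.comp_eVariationOn_le (mapsTo_id _)
    rw [Function.comp_id] at hcomp
    calc pathLength γ ≤ (K : ENNReal) * eVariationOn (id : ℝ → ℝ) (Set.Icc 0 1) := hcomp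
    _ ≤ (K : ENNReal) * ENNReal.ofReal 1 := mul_le_mul_right hid _
    _ = (K : ENNReal) := by rw [ENNReal.ofReal_one, mul_one]
  have hdinn : dInn X x y ≤ pathLength γ := by
    exact iInf₂_le γ hpath
  refine hdinn.trans (hvar.trans ?_)
  rw [show (2 : ℝ) * dist x y = 2*‖y - x‖ by rw [dist_eq_norm, norm_sub_rev]]
  rw [ENNReal.ofReal, hK]
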